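/- For every natural number n, the number of partitions of an n-element finite set equals Σ_{i=0}^{n} (1/i!) · Σ_{j=0}^{i} (−1)^{i−j} · C(i,j) · j^n, where the equality is of real numbers and C(i,j) denotes the binomial coefficient. -/

import Mathlib

open Finset

noncomputable section BellAux

/-- The number of surjections from `Fin n` onto `Fin i`. -/
private def surjCount (n i : ℕ) : ℕ := Nat.card {f : Fin n → Fin i // Function.Surjective f}

private instance (n : ℕ) : Finite (Setoid (Fin n)) :=
  Finite.of_injective (fun s : Setoid (Fin n) => ⇑s)
    (fun _ _ h => Setoid.ext fun x y => iff_of_eq (congrFun (congrFun h x) y))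

private noncomputable instance (n : ℕ) : Fintype (Setoid (Fin n)) := Fintype.ofFinite _

private lemma card_fun_eq (n j : ℕ) :
    (j : ℕ) ^ n =
      ∑ T : Finset (Fin j), Nat.card {f : Fin n → {x // x ∈ T} // Function.Surjective f} := by
  classical
  have hbij : Function.Bijective
      (fun p : Σ T : Finset (Fin j), {f : Fin n → {x // x ∈ T} // Function.Surjective f} =>
        (fun a => (p.2.1 a).1 : Fin n → Fin j)) := by
    constructor
    · rintro ⟨T, f, hf⟩ ⟨T', f', hf'⟩ h
      simp only at h
      have hT : T = T' := by
        ext x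
        constructor
        · intro hx
          obtain ⟨a, ha⟩ := hf ⟨x, hx⟩
          have : (f' a).1 = x := by rw [← congrFun h a, ha]
          exact this ▸ (f' a).2
        · intro hx
          obtain ⟨a, ha⟩ := hf' ⟨x, hx⟩
          have : (f a).1 = x := by rw [congrFun h a, ha]
          exact this ▸ (f a).2
      subst hT
      have hff : f = f' := funext fun a => Subtype.ext (congrFun h a)
      simp [hff]
    · intro g
      refine ⟨⟨Finset.image g Finset.univ,
        fun a => ⟨g a, Finset.mem_image_of_mem g (Finset.mem_univ a)⟩, ?_⟩, rfl⟩
      rintro ⟨x, hx⟩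
      obtain ⟨a, -, ha⟩ := Finset.mem_image.1 hx
      exact ⟨a, Subtype.ext ha⟩
  haveI : ∀ T : Finset (Fin j), Fintype {f : Fin n → {x // x ∈ T} // Function.Surjective f} :=
    fun T => Fintype.ofFinite _
  have := Nat.card_eq_of_bijective _ hbij
  rw [Nat.card_eq_fintype_card, Nat.card_eq_fintype_card, Fintype.card_sigma,
    Fintype.card_fun] at this
  simp only [Nat.card_eq_fintype_card]
  simpa using this.symm

private lemma card_surj_onto (n : ℕ) {j : ℕ} (T : Finset (Fin j)) :
    Nat.card {f : Fin n → {x // x ∈ T} // Function.Surjective f} = surjCount n T.card := by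
  let e : {x // x ∈ T} ≃ Fin T.card := T.equivFin
  exact Nat.card_congr <| Equiv.subtypeEquiv
    (Equiv.arrowCongr (Equiv.refl (Fin n)) e)
    (fun f => by
      have h1 : (Equiv.arrowCongr (Equiv.refl (Fin n)) e) f = e ∘ f := by
        ext x; simp [Equiv.arrowCongr]
      rw [h1]
      exact (EquivLike.comp_surjective f e).symm)

private lemma pow_eq_sum_surj (n j : ℕ) :
    (j : ℕ) ^ n = ∑ t ∈ range (j + 1), j.choose t * surjCount n t := by
  classical
  have h1 : (j : ℕ) ^ n = ∑ T : Finset (Fin j), surjCount n T.card := by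
    rw [card_fun_eq n j]
    exact Finset.sum_congr rfl fun T _ => card_surj_onto n T
  rw [h1, ← Finset.powerset_univ, Finset.sum_powerset_apply_card]
  simp [Finset.card_univ, mul_comm]

private lemma card_equiv_fin (α : Type) [Finite α] (i : ℕ) :
    Nat.card (α ≃ Fin i) = if Nat.card α = i then i.factorial else 0 := by
  classical
  haveI := Fintype.ofFinite α
  rw [Nat.card_eq_fintype_card]
  split_ifs with h
  · rw [Nat.card_eq_fintype_card] at h
    have e : α ≃ Fin i := Fintype.equivFinOfCardEq h
    rw [Fintype.card_equiv e, h]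
  · rw [Nat.card_eq_fintype_card] at h
    have : IsEmpty (α ≃ Fin i) := by
      constructor; intro e
      exact h (by simpa using Fintype.card_congr e)
    simp [Nat.card_eq_fintype_card]

private lemma surjCount_eq_sum_setoid (n i : ℕ) :
    (surjCount n i : ℕ) =
      ∑ s : Setoid (Fin n), Nat.card (Quotient s ≃ Fin i) := by
  classical
  haveI : ∀ s : Setoid (Fin n), Fintype (Quotient s ≃ Fin i) := fun s => Fintype.ofFinite _
  have hbij : Function.Bijective
      (fun p : Σ s : Setoid (Fin n), (Quotient s ≃ Fin i) =>
        (⟨fun a => p.2 (Quotient.mk p.1 a),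
          p.2.surjective.comp (Quot.mk_surjective)⟩ :
            {f : Fin n → Fin i // Function.Surjective f})) := by
    constructor
    · rintro ⟨s, e⟩ ⟨s', e'⟩ h
      simp only [Subtype.mk.injEq] at h
      have hs : s = s' := by
        apply Setoid.ext; intro x y
        have hx := congrFun h x
        have hy := congrFun h y
        constructor
        · intro hxy
          have : e' (Quotient.mk s' x) = e' (Quotient.mk s' y) := by
            rw [← hx, ← hy, Quotient.sound hxy]
          exact Quotient.exact (e'.injective this)
        · intro hxy
          have : e (Quotient.mk s x) = e (Quotient.mk s y) := by
            rw [hx, hy, Quotient.sound hxy]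
          exact Quotient.exact (e.injective this)
      subst hs
      have he : e = e' := by
        apply Equiv.ext
        intro q
        induction q using Quotient.ind with
        | _ a => exact congrFun h a
      rw [he]
    · rintro ⟨f, hf⟩
      refine ⟨⟨Setoid.ker f, Setoid.quotientKerEquivOfSurjective f hf⟩, ?_⟩
      apply Subtype.ext
      funext a
      rfl
  have := Nat.card_eq_of_bijective _ hbij
  rw [Nat.card_eq_fintype_card, Fintype.card_sigma] at this
  rw [surjCount, ← this]
  simp [Nat.card_eq_fintype_card]

private lemma alt_sum_real (m : ℕ) :
    ∑ k ∈ range (m + 1), (-1:ℝ) ^ (m - k) * (m.choose k : ℝ) =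
      if m = 0 then 1 else 0 := by
  have h := Finset.sum_range_reflect (fun k => (-1:ℝ) ^ (m - k) * (m.choose k : ℝ)) (m + 1)
  simp only [Nat.add_sub_cancel] at h
  have h2 : ∀ j ∈ range (m + 1),
      (-1:ℝ) ^ (m - (m - j)) * ((m.choose (m - j) : ℕ) : ℝ) =
        (-1:ℝ) ^ j * (m.choose j : ℝ) := by
    intro j hj
    have hj' : j ≤ m := Nat.lt_succ_iff.1 (mem_range.1 hj)
    rw [Nat.sub_sub_self hj', Nat.choose_symm hj']
  rw [Finset.sum_congr rfl h2] at h
  rw [← h]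
  have hint := Int.alternating_sum_range_choose (n := m)
  have h6 := congrArg (fun z : ℤ => (z : ℝ)) hint
  push_cast at h6
  rw [← h6]

private lemma K_sum (i t : ℕ) (ht : t ≤ i) :
    ∑ j ∈ range (i + 1), (-1:ℝ) ^ (i - j) * (i.choose j : ℝ) * (j.choose t : ℝ) =
      if t = i then 1 else 0 := by
  rw [show i + 1 = t + (i - t + 1) by omega, Finset.sum_range_add]
  have h1 : ∑ j ∈ range t, (-1:ℝ) ^ (i - j) * (i.choose j : ℝ) * (j.choose t : ℝ) = 0 := by
    apply Finset.sum_eq_zero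
    intro j hj
    rw [Nat.choose_eq_zero_of_lt (mem_range.1 hj)]
    simp
  rw [h1, zero_add]
  have h2 : ∀ k ∈ range (i - t + 1),
      (-1:ℝ) ^ (i - (t + k)) * (i.choose (t + k) : ℝ) * ((t + k).choose t : ℝ) =
        (i.choose t : ℝ) * ((-1:ℝ) ^ ((i - t) - k) * ((i - t).choose k : ℝ)) := by
    intro k hk
    have hk' : k ≤ i - t := Nat.lt_succ_iff.1 (mem_range.1 hk)
    have h3 : i.choose (t + k) * (t + k).choose t = i.choose t * (i - t).choose k := by
      have := Nat.choose_mul (n := i) (k := t + k) (s := t) (by omega)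
      simpa using this
    have h4 : i - (t + k) = (i - t) - k := by omega
    have h5 := congrArg (fun z : ℕ => (z : ℝ)) h3
    push_cast at h5
    rw [h4, mul_assoc, h5]
    ring
  rw [Finset.sum_congr rfl h2, ← Finset.mul_sum, alt_sum_real]
  by_cases h : t = i
  · subst h; simp
  · have : i - t ≠ 0 := by omega
    simp [this, h]

private lemma surj_inv (n i : ℕ) :
    ∑ j ∈ range (i + 1), (-1:ℝ) ^ (i - j) * (i.choose j : ℝ) * (j : ℝ) ^ n
      = (surjCount n i : ℝ) := by
  have hpow : ∀ j : ℕ, ((j : ℝ) ^ n) =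
      ∑ t ∈ range (j + 1), (j.choose t : ℝ) * (surjCount n t : ℝ) := by
    intro j
    have := pow_eq_sum_surj n j
    exact_mod_cast congrArg (fun x : ℕ => (x : ℝ)) this
  calc ∑ j ∈ range (i + 1), (-1:ℝ) ^ (i - j) * (i.choose j : ℝ) * (j : ℝ) ^ n
      = ∑ j ∈ range (i + 1), ∑ t ∈ range (i + 1),
          (-1:ℝ) ^ (i - j) * (i.choose j : ℝ) * ((j.choose t : ℝ) * (surjCount n t : ℝ)) := by
        apply Finset.sum_congr rfl
        intro j hj
        rw [hpow j, Finset.mul_sum]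
        apply Finset.sum_subset
        · exact Finset.range_subset_range.2 (by have := mem_range.1 hj; omega)
        · intro t _ ht
          have htj : j < t := by
            have := mem_range.not.1 ht
            omega
          rw [Nat.choose_eq_zero_of_lt htj]
          simp
    _ = ∑ t ∈ range (i + 1), (∑ j ∈ range (i + 1),
          (-1:ℝ) ^ (i - j) * (i.choose j : ℝ) * (j.choose t : ℝ)) * (surjCount n t : ℝ) := by
        rw [Finset.sum_comm]
        apply Finset.sum_congr rfl
        intro t _
        rw [Finset.sum_mul]
        apply Finset.sum_congr rfl
        intro j _
        ring
    _ = (surjCount n i : ℝ) := by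
        rw [Finset.sum_congr rfl (fun t ht => by
          rw [K_sum i t (Nat.lt_succ_iff.1 (mem_range.1 ht))])]
        simp

end BellAux

/-- The number of partitions of an `n`-element set (the `n`-th Bell number) equals
`Σ_{i=0}^{n} (1/i!) Σ_{j=0}^{i} (−1)^{i−j} C(i,j) j^n`. -/
theorem card_partitions_eq_bell_formula (n : ℕ) :
    (Nat.card {P : Set (Set (Fin n)) // Setoid.IsPartition P} : ℝ) =
      ∑ i ∈ range (n + 1), (1 / (Nat.factorial i : ℝ)) *
        ∑ j ∈ range (i + 1), (-1 : ℝ) ^ (i - j) * (Nat.choose i j : ℝ) * (j : ℝ) ^ n := by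
  classical
  have hL : Nat.card {P : Set (Set (Fin n)) // Setoid.IsPartition P}
      = Nat.card (Setoid (Fin n)) :=
    (Nat.card_congr (Setoid.Partition.orderIso (Fin n)).toEquiv).symm
  rw [hL]
  have hsurj : ∀ i : ℕ, (surjCount n i : ℝ) =
      ∑ s : Setoid (Fin n), (if Nat.card (Quotient s) = i then (i.factorial : ℝ) else 0) := by
    intro i
    have := congrArg (fun x : ℕ => (x : ℝ)) (surjCount_eq_sum_setoid n i)
    push_cast at this
    rw [this]
    apply Finset.sum_congr rfl
    intro s _
    rw [card_equiv_fin _ i]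
    split_ifs <;> simp
  have key : ∀ i ∈ range (n + 1),
      (1 / (Nat.factorial i : ℝ)) *
          ∑ j ∈ range (i + 1), (-1 : ℝ) ^ (i - j) * (Nat.choose i j : ℝ) * (j : ℝ) ^ n
        = ∑ s : Setoid (Fin n), (if Nat.card (Quotient s) = i then (1:ℝ) else 0) := by
    intro i _
    rw [surj_inv n i, hsurj i, Finset.mul_sum]
    apply Finset.sum_congr rfl
    intro s _
    split_ifs
    · rw [one_div, inv_mul_cancel₀]
      exact_mod_cast Nat.factorial_ne_zero i
    · simp
  rw [Finset.sum_congr rfl key, Finset.sum_comm]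
  have hcard : ∀ s : Setoid (Fin n),
      ∑ i ∈ range (n + 1), (if Nat.card (Quotient s) = i then (1:ℝ) else 0) = 1 := by
    intro s
    rw [Finset.sum_ite_eq]
    rw [if_pos]
    rw [mem_range]
    have : Nat.card (Quotient s) ≤ Nat.card (Fin n) :=
      Nat.card_le_card_of_surjective _ Quot.mk_surjective
    simpa using Nat.lt_succ_of_le (by simpa using this)
  rw [Finset.sum_congr rfl (fun s _ => hcard s)]
  simp [Finset.card_univ, Nat.card_eq_fintype_card]
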